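/- The nucleus assignments N_L and N_R are well-defined functors (for every W-coalgebra (y, β) the pair (R y, R ε_y) is a T-algebra, and for every T-algebra (x, α) the pair (L x, L η_x) is a W-coalgebra), and N_L is left adjoint to N_R: there is a bijection Hom_{Alg(T)}(N_L(y,β), (x,α)) ≅ Hom_{Coalg(W)}((y,β), N_R(x,α)), natural in (y,β) and (x,α), which sends an algebra homomorphism f : R y ⟶ x to the coalgebra homomorphism β ≫ L f : y ⟶ L x. -/

import Mathlib

open CategoryTheory

variable {A : Type*} {B : Type*} [Category A] [Category B]

/-- The nucleus functor `N_L : Coalg(W) ⥤ Alg(T)`, sending a coalgebra `(y, β)` to the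
algebra `(R y, R ε_y)` and a coalgebra morphism `f` to `R f`. -/
def nucleusNL (L : A ⥤ B) (R : B ⥤ A) (adj : L ⊣ R) :
    adj.toComonad.Coalgebra ⥤ adj.toMonad.Algebra where
  obj y :=
    { A := R.obj y.A
      a := R.map (adj.counit.app y.A)
      unit := by simp [Adjunction.toMonad]
      assoc := by
        dsimp [Adjunction.toMonad]
        rw [← R.map_comp, ← R.map_comp, adj.counit_naturality] }
  map f :=
    { f := R.map f.f
      h := by
        dsimp [Adjunction.toMonad]
        rw [← R.map_comp, ← R.map_comp, adj.counit_naturality] }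
  map_id := by intros; ext; simp
  map_comp := by intros; ext; simp

/-- The nucleus functor `N_R : Alg(T) ⥤ Coalg(W)`, sending an algebra `(x, α)` to the
coalgebra `(L x, L η_x)` and an algebra morphism `f` to `L f`. -/
def nucleusNR (L : A ⥤ B) (R : B ⥤ A) (adj : L ⊣ R) :
    adj.toMonad.Algebra ⥤ adj.toComonad.Coalgebra where
  obj x :=
    { A := L.obj x.A
      a := L.map (adj.unit.app x.A)
      counit := by simp [Adjunction.toComonad]
      coassoc := by
        dsimp [Adjunction.toComonad]
        rw [← L.map_comp, ← L.map_comp, adj.unit_naturality] }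
  map f :=
    { f := L.map f.f
      h := by
        dsimp [Adjunction.toComonad]
        rw [← L.map_comp, ← L.map_comp, adj.unit_naturality] }
  map_id := by intros; ext; simp
  map_comp := by intros; ext; simp

/-- the nucleus assignments are well-defined functors (for every `W`-coalgebra
`(y, β)` the pair `(R y, R ε_y)` satisfies the `T`-algebra laws, and for every `T`-algebra
`(x, α)` the pair `(L x, L η_x)` satisfies the `W`-coalgebra laws), and `N_L` is left adjoint
to `N_R`, the adjunction bijection sending an algebra homomorphism `f : R y ⟶ x` to the
coalgebra homomorphism `β ≫ L f : y ⟶ L x`, naturally in `(y, β)` and `(x, α)`. -/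

def nucleusHomEquiv (L : A ⥤ B) (R : B ⥤ A) (adj : L ⊣ R)
    (y : adj.toComonad.Coalgebra) (x : adj.toMonad.Algebra) :
    ((nucleusNL L R adj).obj y ⟶ x) ≃ (y ⟶ (nucleusNR L R adj).obj x) where
  toFun f :=
    { f := y.a ≫ L.map f.f
      h := by
        have coassoc := y.coassoc
        dsimp [Adjunction.toComonad] at coassoc
        dsimp [nucleusNL, nucleusNR, Adjunction.toComonad]
        rw [R.map_comp, L.map_comp, ← Category.assoc, ← coassoc, Category.assoc,
          Category.assoc, ← L.map_comp, ← L.map_comp, adj.unit_naturality] }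
  invFun g :=
    { f := R.map g.f ≫ x.a
      h := by
        have assoc := x.assoc
        dsimp [Adjunction.toMonad] at assoc
        dsimp [nucleusNL, nucleusNR, Adjunction.toMonad]
        rw [L.map_comp, R.map_comp, Category.assoc, ← assoc, ← Category.assoc,
          ← R.map_comp, adj.counit_naturality, R.map_comp, Category.assoc] }
  left_inv f := by
    ext
    have hf := f.h
    have c := y.counit
    dsimp [Adjunction.toComonad] at c
    dsimp [nucleusNL, nucleusNR, Adjunction.toMonad, Adjunction.toComonad] at hf ⊢
    rw [R.map_comp, Category.assoc, hf, ← Category.assoc, ← R.map_comp, c, R.map_id,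
      Category.id_comp]
  right_inv g := by
    ext
    have hg := g.h
    have u := x.unit
    dsimp [Adjunction.toMonad] at u
    dsimp [nucleusNL, nucleusNR, Adjunction.toMonad, Adjunction.toComonad] at hg ⊢
    rw [L.map_comp, ← Category.assoc, hg, Category.assoc, ← L.map_comp, u, L.map_id,
      Category.comp_id]

def nucleusAdj (L : A ⥤ B) (R : B ⥤ A) (adj : L ⊣ R) :
    nucleusNL L R adj ⊣ nucleusNR L R adj :=
  Adjunction.mkOfHomEquiv
    { homEquiv := nucleusHomEquiv L R adj
      homEquiv_naturality_left_symm := by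
        intros y' y x f g
        ext
        dsimp [nucleusHomEquiv, nucleusNL, nucleusNR]
        show R.map (f.f ≫ g.f) ≫ x.a = R.map f.f ≫ R.map g.f ≫ x.a
        exact (congrArg (· ≫ x.a) (R.map_comp f.f g.f)).trans (Category.assoc _ _ _)
      homEquiv_naturality_right := by
        intros y x x' f g
        ext
        dsimp [nucleusHomEquiv, nucleusNL, nucleusNR]
        show y.a ≫ L.map (f.f ≫ g.f) = (y.a ≫ L.map f.f) ≫ L.map g.f
        exact (congrArg (y.a ≫ ·) (L.map_comp f.f g.f)).trans (Category.assoc _ _ _).symm }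

theorem nucleus_functors_welldefined_and_adjoint
    (L : A ⥤ B) (R : B ⥤ A) (adj : L ⊣ R) :
    -- well-definedness of `N_L` on objects: `(R y, R ε_y)` is a `T`-algebra
    (∀ y : adj.toComonad.Coalgebra,
      (adj.unit.app (R.obj y.A) ≫ R.map (adj.counit.app y.A) = 𝟙 (R.obj y.A)) ∧
      (R.map (adj.counit.app (L.obj (R.obj y.A))) ≫ R.map (adj.counit.app y.A)
        = R.map (L.map (R.map (adj.counit.app y.A))) ≫ R.map (adj.counit.app y.A))) ∧
    -- well-definedness of `N_R` on objects: `(L x, L η_x)` is a `W`-coalgebra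
    (∀ x : adj.toMonad.Algebra,
      (L.map (adj.unit.app x.A) ≫ adj.counit.app (L.obj x.A) = 𝟙 (L.obj x.A)) ∧
      (L.map (adj.unit.app x.A) ≫ L.map (adj.unit.app (R.obj (L.obj x.A)))
        = L.map (adj.unit.app x.A) ≫ L.map (R.map (L.map (adj.unit.app x.A))))) ∧
    -- `N_L ⊣ N_R`, with the (natural) bijection sending `f : N_L (y,β) ⟶ (x,α)` to `β ≫ L f`
    (∃ adjN : nucleusNL L R adj ⊣ nucleusNR L R adj,
      ∀ (y : adj.toComonad.Coalgebra) (x : adj.toMonad.Algebra)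
        (f : (nucleusNL L R adj).obj y ⟶ x),
        ((adjN.homEquiv y x) f).f = y.a ≫ L.map f.f) := by
  refine ⟨fun y => ⟨by simp, ?_⟩, fun x => ⟨by simp, ?_⟩, nucleusAdj L R adj, ?_⟩
  · rw [← R.map_comp, ← R.map_comp]
    exact congrArg R.map (adj.counit_naturality _).symm
  · rw [← L.map_comp, ← L.map_comp]
    exact congrArg L.map (adj.unit_naturality _).symm
  · intro y x f
    rw [show nucleusAdj L R adj = Adjunction.mkOfHomEquiv _ from rfl,
      Adjunction.mkOfHomEquiv_homEquiv]
    rfl
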